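/- Let N ≥ 2, 0 < ε < π/2 and 0 < η < min{π/4, ε/2}. Then there exists a constant C > 0, depending only on N, ε, η, such that for all λ ∈ Σ_ε, all ξ' = (ξ_1, …, ξ_{N−1}) with each ξ_j ∈ Σ̃_η, all x_N > 0 and all m, ℓ ∈ {1, …, N−1}, each of the functions S(x_N) = B^{−2} ∂_{x_N} χ^D_k(λ, ξ', x_N) with 1 ≤ k ≤ N, S(x_N) = λ^{1/2} B^{−2} χ^D_k(λ, ξ', x_N) with 1 ≤ k ≤ N−1, and S(x_N) = i ξ_m B^{−2} χ^D_k(λ, ξ', x_N) with 1 ≤ k ≤ N, satisfies |ξ_ℓ| |S(x_N)| + |∂_{x_N} S(x_N)| ≤ C x_N^{−1}. -/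

import Mathlib

open Complex

noncomputable section

/-- The sector `Σ_ε = {λ ∈ ℂ \ {0} : |arg λ| < π − ε}`. -/
def SSector (ε : ℝ) : Set ℂ := {z | z ≠ 0 ∧ |z.arg| < Real.pi - ε}

/-- The double sector `Σ̃_η = {z ∈ ℂ \ {0} : |arg z| < η or |arg z| > π − η}`. -/
def DSector (η : ℝ) : Set ℂ := {z | z ≠ 0 ∧ (|z.arg| < η ∨ Real.pi - η < |z.arg|)}

/-- `A = (ξ_1² + ⋯ + ξ_{N−1}²)^{1/2}` (principal square root). -/
def AA {n : ℕ} (ξ : Fin n → ℂ) : ℂ := (∑ j, ξ j ^ 2) ^ ((1 : ℂ) / 2)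

/-- `B = (λ + A²)^{1/2}` (principal square root). -/
def BB {n : ℕ} (lam : ℂ) (ξ : Fin n → ℂ) : ℂ := (lam + AA ξ ^ 2) ^ ((1 : ℂ) / 2)

/-- `Ã = (|ξ_1|² + ⋯ + |ξ_{N−1}|²)^{1/2}`. -/
def tA {n : ℕ} (ξ : Fin n → ℂ) : ℝ := Real.sqrt (∑ j, ‖ξ j‖ ^ 2)

/-- `M_λ(ξ', x_N) = (e^{−B x_N} − e^{−A x_N})/(B − A)`. -/
def Mfun {n : ℕ} (lam : ℂ) (ξ : Fin n → ℂ) (x : ℝ) : ℂ :=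
  (Complex.exp (-BB lam ξ * (x : ℂ)) - Complex.exp (-AA ξ * (x : ℂ))) / (BB lam ξ - AA ξ)


/-- `D(A,B) = B³ + AB² + 3A²B − A³`. -/
def DAB {n : ℕ} (lam : ℂ) (ξ : Fin n → ℂ) : ℂ :=
  BB lam ξ ^ 3 + AA ξ * BB lam ξ ^ 2 + 3 * AA ξ ^ 2 * BB lam ξ - AA ξ ^ 3

/-- The Dirichlet velocity symbols `φ^D_{j,k}(λ, ξ', x_N)`; the index `N` of the paper
corresponds to the last index of `Fin N`, the indices `1, …, N−1` to the first `N−1`. -/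
def phiD (N : ℕ) (lam : ℂ) (ξ : Fin (N - 1) → ℂ) (j k : Fin N) (x : ℝ) : ℂ :=
  if hj : (j : ℕ) < N - 1 then
    if hk : (k : ℕ) < N - 1 then
      (if j = k then 1 else 0) * Complex.exp (-BB lam ξ * (x : ℂ))
        + ξ ⟨j, hj⟩ * ξ ⟨k, hk⟩ / AA ξ * Mfun lam ξ x
    else Complex.I * ξ ⟨j, hj⟩ * BB lam ξ / AA ξ * Mfun lam ξ x
  else
    if hk : (k : ℕ) < N - 1 then Complex.I * ξ ⟨k, hk⟩ * Mfun lam ξ x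
    else Complex.exp (-BB lam ξ * (x : ℂ)) - BB lam ξ * Mfun lam ξ x

/-- The Dirichlet pressure symbols `χ^D_k(λ, ξ', x_N)`. -/
def chiD (N : ℕ) (lam : ℂ) (ξ : Fin (N - 1) → ℂ) (k : Fin N) (x : ℝ) : ℂ :=
  if hk : (k : ℕ) < N - 1 then
    -(Complex.I * ξ ⟨k, hk⟩ * (AA ξ + BB lam ξ) / AA ξ) * Complex.exp (-AA ξ * (x : ℂ))
  else (AA ξ + BB lam ξ) * BB lam ξ / AA ξ * Complex.exp (-AA ξ * (x : ℂ))

/-- The Neumann velocity symbols `φ^N_{j,k}(λ, ξ', x_N)`. -/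
def phiN (N : ℕ) (lam : ℂ) (ξ : Fin (N - 1) → ℂ) (j k : Fin N) (x : ℝ) : ℂ :=
  if hj : (j : ℕ) < N - 1 then
    if hk : (k : ℕ) < N - 1 then
      ((if j = k then 1 else 0) / BB lam ξ
          - ξ ⟨j, hj⟩ * ξ ⟨k, hk⟩ * (3 * BB lam ξ - AA ξ) / (DAB lam ξ * BB lam ξ))
          * Complex.exp (-BB lam ξ * (x : ℂ))
        + 2 * ξ ⟨j, hj⟩ * ξ ⟨k, hk⟩ * BB lam ξ / DAB lam ξ * Mfun lam ξ x
    else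
      -(Complex.I * ξ ⟨j, hj⟩ * (BB lam ξ - AA ξ) / DAB lam ξ)
          * Complex.exp (-BB lam ξ * (x : ℂ))
        + Complex.I * ξ ⟨j, hj⟩ * (AA ξ ^ 2 + BB lam ξ ^ 2) / DAB lam ξ * Mfun lam ξ x
  else
    if hk : (k : ℕ) < N - 1 then
      Complex.I * ξ ⟨k, hk⟩ * (BB lam ξ - AA ξ) / DAB lam ξ
          * Complex.exp (-BB lam ξ * (x : ℂ))
        + 2 * Complex.I * ξ ⟨k, hk⟩ * AA ξ * BB lam ξ / DAB lam ξ * Mfun lam ξ x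
    else
      AA ξ * (AA ξ + BB lam ξ) / DAB lam ξ * Complex.exp (-BB lam ξ * (x : ℂ))
        - AA ξ * (AA ξ ^ 2 + BB lam ξ ^ 2) / DAB lam ξ * Mfun lam ξ x

/-- The Neumann pressure symbols `χ^N_k(λ, ξ', x_N)`. -/
def chiN (N : ℕ) (lam : ℂ) (ξ : Fin (N - 1) → ℂ) (k : Fin N) (x : ℝ) : ℂ :=
  if hk : (k : ℕ) < N - 1 then
    -(2 * Complex.I * ξ ⟨k, hk⟩ * BB lam ξ * (AA ξ + BB lam ξ) / DAB lam ξ)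
      * Complex.exp (-AA ξ * (x : ℂ))
  else (AA ξ + BB lam ξ) * (AA ξ ^ 2 + BB lam ξ ^ 2) / DAB lam ξ
      * Complex.exp (-AA ξ * (x : ℂ))

/-- The Robin velocity symbols `φ^R_{j,k}(λ, ξ', x_N)` with Robin parameters `a ≥ 0`, `b > 0`. -/
def phiR (N : ℕ) (a b : ℝ) (lam : ℂ) (ξ : Fin (N - 1) → ℂ) (j k : Fin N) (x : ℝ) : ℂ :=
  if hj : (j : ℕ) < N - 1 then
    if hk : (k : ℕ) < N - 1 then
      ((if j = k then 1 else 0) / ((a : ℂ) + (b : ℂ) * BB lam ξ)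
          - (b : ℂ) * ξ ⟨j, hj⟩ * ξ ⟨k, hk⟩
            / (((a : ℂ) + (b : ℂ) * BB lam ξ)
               * ((a : ℂ) + (b : ℂ) * (AA ξ + BB lam ξ)) * AA ξ))
          * Complex.exp (-BB lam ξ * (x : ℂ))
        + ξ ⟨j, hj⟩ * ξ ⟨k, hk⟩ / (((a : ℂ) + (b : ℂ) * (AA ξ + BB lam ξ)) * AA ξ)
          * Mfun lam ξ x
    else
      -(Complex.I * (b : ℂ) * ξ ⟨j, hj⟩ * BB lam ξ
            / (((a : ℂ) + (b : ℂ) * (AA ξ + BB lam ξ)) * AA ξ))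
          * Complex.exp (-BB lam ξ * (x : ℂ))
        + Complex.I * ξ ⟨j, hj⟩ * BB lam ξ * ((a : ℂ) + (b : ℂ) * BB lam ξ)
            / (((a : ℂ) + (b : ℂ) * (AA ξ + BB lam ξ)) * AA ξ) * Mfun lam ξ x
  else
    if hk : (k : ℕ) < N - 1 then
      Complex.I * ξ ⟨k, hk⟩ / ((a : ℂ) + (b : ℂ) * (AA ξ + BB lam ξ)) * Mfun lam ξ x
    else
      Complex.exp (-BB lam ξ * (x : ℂ))
        - BB lam ξ * ((a : ℂ) + (b : ℂ) * BB lam ξ)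
            / ((a : ℂ) + (b : ℂ) * (AA ξ + BB lam ξ)) * Mfun lam ξ x



lemma sqh_sq (w : ℂ) : (w ^ ((1:ℂ)/2)) ^ (2:ℕ) = w := by
  have := Complex.cpow_nat_inv_pow w (n := 2) two_ne_zero
  norm_num at this
  simpa using this

lemma sqh_abs_sq (w : ℂ) : ‖w ^ ((1:ℂ)/2)‖ ^ 2 = ‖w‖ := by
  rw [← norm_pow, sqh_sq]

lemma sqh_re_nonneg (w : ℂ) : 0 ≤ (w ^ ((1:ℂ)/2)).re := by
  rcases eq_or_ne w 0 with h | h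
  · simp [h, Complex.zero_cpow (by norm_num : ((1:ℂ)/2) ≠ 0)]
  · rw [Complex.cpow_def_of_ne_zero h, Complex.exp_re]
    apply mul_nonneg (Real.exp_nonneg _)
    have him : (Complex.log w * ((1:ℂ)/2)).im = w.arg / 2 := by
      simp [Complex.mul_im, Complex.log_im, Complex.log_re]
      ring
    rw [him]
    apply Real.cos_nonneg_of_mem_Icc
    constructor
    · nlinarith [(Complex.arg_mem_Ioc w).1]
    · nlinarith [(Complex.arg_mem_Ioc w).2]

lemma le_sqrt_mul {a b K : ℝ} (ha : 0 ≤ a) (hb : 0 ≤ b) (hK : 0 ≤ K) (h : a^2 ≤ K * b^2) :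
    a ≤ Real.sqrt K * b := by
  have h2 := Real.sqrt_le_sqrt h
  rwa [Real.sqrt_sq ha, Real.sqrt_mul hK, Real.sqrt_sq hb] at h2

lemma sqh_re_ge {w : ℂ} {c : ℝ} (hc : 0 < c) (hw0 : w ≠ 0)
    (hw : c * ‖w‖ ≤ w.re) :
    Real.sqrt (c/2) * ‖w ^ ((1:ℂ)/2)‖ ≤ (w ^ ((1:ℂ)/2)).re := by
  set s := w ^ ((1:ℂ)/2) with hs
  have h1 : s.re * s.re - s.im * s.im = w.re := by
    have : (s ^ (2:ℕ)).re = w.re := by rw [sqh_sq]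
    simpa [pow_two, Complex.mul_re] using this
  have h2 : s.re * s.re + s.im * s.im = ‖w‖ := by
    have := sqh_abs_sq w
    rw [Complex.sq_norm, Complex.normSq_apply] at this
    exact this
  have h3 : 0 ≤ s.re := sqh_re_nonneg w
  have habs : ‖w‖ = ‖s‖ ^ 2 := (sqh_abs_sq w).symm
  have hsq : (c/2) * ‖s‖ ^ 2 ≤ s.re ^ 2 := by
    rw [← habs]; nlinarith [h1, h2, hw]
  calc Real.sqrt (c/2) * ‖s‖
        = Real.sqrt (c/2) * Real.sqrt (‖s‖ ^ 2) := by
          rw [Real.sqrt_sq (norm_nonneg s)]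
    _ = Real.sqrt ((c/2) * ‖s‖ ^2) := by
          rw [Real.sqrt_mul (by positivity)]
    _ ≤ Real.sqrt (s.re ^ 2) := Real.sqrt_le_sqrt hsq
    _ = s.re := Real.sqrt_sq h3



/-- `ξ` in the double sector of angle `η < π/4` has `Re(ξ²) ≥ cos(2η)|ξ|²`. -/
lemma dsector_re_sq {η : ℝ} (hη : 0 < η) (hη4 : η < Real.pi/4) {z : ℂ}
    (hz : z ≠ 0) (hang : |z.arg| < η ∨ Real.pi - η < |z.arg|) :
    Real.cos (2*η) * ‖z‖ ^ 2 ≤ (z^2).re := by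
  have hπ := Real.pi_pos
  have h1 : ‖z‖ * Real.cos z.arg = z.re := Complex.norm_mul_cos_arg z
  have h2 : ‖z‖ * Real.sin z.arg = z.im := Complex.norm_mul_sin_arg z
  have hre : (z^2).re = ‖z‖ ^ 2 * Real.cos (2 * z.arg) := by
    have : (z^2).re = z.re * z.re - z.im * z.im := by simp [pow_two, Complex.mul_re]
    rw [this, ← h1, ← h2, Real.cos_two_mul]
    nlinarith [Real.sin_sq_add_cos_sq z.arg]
  rw [hre]
  have hkey : Real.cos (2*η) ≤ Real.cos (2 * z.arg) := by
    have hcabs : Real.cos (2 * z.arg) = Real.cos (2 * |z.arg|) := by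
      rcases abs_cases z.arg with ⟨h, _⟩ | ⟨h, _⟩
      · rw [h]
      · rw [h]; rw [show (2:ℝ) * -z.arg = -(2*z.arg) by ring, Real.cos_neg]
    rw [hcabs]
    rcases hang with h | h
    · exact Real.cos_le_cos_of_nonneg_of_le_pi (by positivity) (by linarith) (by linarith)
    · have hle : |z.arg| ≤ Real.pi := Complex.abs_arg_le_pi z
      have : Real.cos (2 * |z.arg|) = Real.cos (2*Real.pi - 2 * |z.arg|) := by
        rw [Real.cos_two_pi_sub]
      rw [this]
      exact Real.cos_le_cos_of_nonneg_of_le_pi (by linarith) (by linarith) (by linarith)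
  nlinarith [norm_nonneg z, sq_nonneg (‖z‖)]

/-- If `Re w ≥ cos θ |w|` with `θ ∈ [0, π]` and `w ≠ 0` then `|arg w| ≤ θ`. -/
lemma arg_le_of_re_ge {w : ℂ} {θ : ℝ} (hθ0 : 0 ≤ θ) (hθπ : θ ≤ Real.pi)
    (hw : w ≠ 0) (h : Real.cos θ * ‖w‖ ≤ w.re) : |w.arg| ≤ θ := by
  by_contra hc
  push_neg at hc
  have habs : 0 < ‖w‖ := norm_pos_iff.mpr hw
  have h1 : ‖w‖ * Real.cos w.arg = w.re := Complex.norm_mul_cos_arg w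
  have hca : Real.cos w.arg = Real.cos |w.arg| := by
    rcases abs_cases w.arg with ⟨h', _⟩ | ⟨h', _⟩
    · rw [h']
    · rw [h', Real.cos_neg]
  have hlt : Real.cos |w.arg| < Real.cos θ :=
    Real.strictAntiOn_cos ⟨hθ0, hθπ⟩ ⟨abs_nonneg _, Complex.abs_arg_le_pi w⟩ hc
  nlinarith

/-- Lower bound on `|λ + w|` when the angle between `λ` and `w` is at most `π − δ`. -/
lemma abs_add_sq_ge {lam w : ℂ} {δ : ℝ} (hδ0 : 0 < δ) (hδπ : δ ≤ Real.pi)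
    (hang : |lam.arg - w.arg| ≤ Real.pi - δ) :
    ((1 - Real.cos δ)/2) * (‖lam‖ + ‖w‖)^2
      ≤ ‖lam + w‖ ^ 2 := by
  have hl1 := Complex.norm_mul_cos_arg lam
  have hl2 := Complex.norm_mul_sin_arg lam
  have hw1 := Complex.norm_mul_cos_arg w
  have hw2 := Complex.norm_mul_sin_arg w
  have hcross : -(Real.cos δ) * (‖lam‖ * ‖w‖)
      ≤ lam.re * w.re + lam.im * w.im := by
    have he : lam.re * w.re + lam.im * w.im
        = ‖lam‖ * ‖w‖ * Real.cos (lam.arg - w.arg) := by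
      rw [← hl1, ← hl2, ← hw1, ← hw2, Real.cos_sub]; ring
    have hcc : Real.cos (lam.arg - w.arg) = Real.cos |lam.arg - w.arg| := by
      rcases abs_cases (lam.arg - w.arg) with ⟨h', _⟩ | ⟨h', _⟩
      · rw [h']
      · rw [h', Real.cos_neg]
    have hmono : Real.cos (Real.pi - δ) ≤ Real.cos |lam.arg - w.arg| :=
      Real.cos_le_cos_of_nonneg_of_le_pi (abs_nonneg _) (by linarith) hang
    rw [Real.cos_pi_sub] at hmono
    rw [he, hcc]
    nlinarith [norm_nonneg lam, norm_nonneg w,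
      mul_nonneg (norm_nonneg lam) (norm_nonneg w)]
  have e1 : ‖lam + w‖^2 = (lam.re + w.re)^2 + (lam.im + w.im)^2 := by
    rw [Complex.sq_norm, Complex.normSq_apply]; simp [Complex.add_re, Complex.add_im]; ring
  have e2 : ‖lam‖ ^2 = lam.re^2 + lam.im^2 := by
    rw [Complex.sq_norm, Complex.normSq_apply]; ring
  have e3 : ‖w‖ ^2 = w.re^2 + w.im^2 := by
    rw [Complex.sq_norm, Complex.normSq_apply]; ring
  have hc1 := Real.neg_one_le_cos δ
  have hc2 := Real.cos_le_one δ
  nlinarith [sq_nonneg (‖lam‖ - ‖w‖),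
    mul_nonneg (norm_nonneg lam) (norm_nonneg w)]



lemma hasDerivAt_expA (A : ℂ) (y : ℝ) :
    HasDerivAt (fun t : ℝ => Complex.exp (-A * t)) (-A * Complex.exp (-A * y)) y := by
  have h1 : HasDerivAt (fun t : ℝ => ((t : ℝ) : ℂ)) 1 y := by
    simpa using (hasDerivAt_id y).ofReal_comp
  have h2 : HasDerivAt (fun t : ℝ => -A * (t : ℂ)) (-A * 1) y := h1.const_mul (-A)
  have h3 := h2.cexp
  simpa [mul_comm] using h3

lemma abs_expA (A : ℂ) (x : ℝ) :
    ‖Complex.exp (-A * x)‖ = Real.exp (-(A.re * x)) := by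
  rw [Complex.norm_exp]
  congr 1
  simp [Complex.mul_re]

/-- Master estimate: if `S y = c e^{-A y}` with `Re A ≥ α |A|` then
`|ξl| |S x| + |S' x| ≤ ((β+1) K / α) x⁻¹`. -/
lemma master {A c ξl : ℂ} {α β K : ℝ} (hα : 0 < α)
    (hre : α * ‖A‖ ≤ A.re) (hc : ‖c‖ ≤ K)
    (hξl : ‖ξl‖ ≤ β * ‖A‖) (hβ : 0 ≤ β)
    {S : ℝ → ℂ} (hS : S = fun y : ℝ => c * Complex.exp (-A * y))
    {x : ℝ} (hx : 0 < x) :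
    ‖ξl‖ * ‖S x‖ + ‖deriv S x‖
      ≤ ((β + 1) * K / α) * x⁻¹ := by
  have hK : 0 ≤ K := le_trans (norm_nonneg c) hc
  have hderiv : deriv S x = c * (-A * Complex.exp (-A * x)) := by
    rw [hS]
    exact (((hasDerivAt_expA A x).const_mul c)).deriv
  have hSx : ‖S x‖ = ‖c‖ * Real.exp (-(A.re * x)) := by
    rw [hS, norm_mul, abs_expA]
  have hdx : ‖deriv S x‖
      = ‖c‖ * (‖A‖ * Real.exp (-(A.re * x))) := by
    rw [hderiv, norm_mul, norm_mul, abs_expA, norm_neg]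
  have hAre : 0 ≤ A.re := le_trans (by positivity) hre
  have habsA : ‖A‖ ≤ A.re / α := by
    rw [le_div_iff₀ hα]; linarith [hre]
  -- t e^{-t} ≤ 1 for t ≥ 0, applied to t = A.re * x
  have hkey : A.re * Real.exp (-(A.re * x)) ≤ x⁻¹ := by
    have ht : 0 ≤ A.re * x := mul_nonneg hAre hx.le
    have h1 : A.re * x ≤ Real.exp (A.re * x) := by
      linarith [Real.add_one_le_exp (A.re * x), Real.exp_pos (A.re * x)]
    have h2 : A.re * x * Real.exp (-(A.re * x)) ≤ 1 := by
      rw [Real.exp_neg, ← div_eq_mul_inv, div_le_one (Real.exp_pos _)]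
      exact h1
    calc A.re * Real.exp (-(A.re * x)) = (A.re * x * Real.exp (-(A.re * x))) * x⁻¹ := by
          field_simp
      _ ≤ 1 * x⁻¹ := by
          apply mul_le_mul_of_nonneg_right h2 (by positivity)
      _ = x⁻¹ := one_mul _
  have hE : 0 ≤ Real.exp (-(A.re * x)) := (Real.exp_pos _).le
  calc ‖ξl‖ * ‖S x‖ + ‖deriv S x‖
      ≤ (β * ‖A‖) * (K * Real.exp (-(A.re * x)))
        + K * (‖A‖ * Real.exp (-(A.re * x))) := by
        rw [hSx, hdx]
        gcongr
    _ = (β + 1) * K * (‖A‖ * Real.exp (-(A.re * x))) := by ring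
    _ ≤ (β + 1) * K * ((A.re / α) * Real.exp (-(A.re * x))) := by
        gcongr
    _ = ((β + 1) * K / α) * (A.re * Real.exp (-(A.re * x))) := by ring
    _ ≤ ((β + 1) * K / α) * x⁻¹ := by
        gcongr


set_option maxHeartbeats 1000000 in
/-- Bounds for the decomposed Dirichlet pressure symbols. -/
theorem dirichlet_pressure_symbol_bounds
    (N : ℕ) (hN : 2 ≤ N) (ε η : ℝ) (hε : 0 < ε) (hε' : ε < Real.pi / 2)
    (hη : 0 < η) (hη' : η < min (Real.pi / 4) (ε / 2)) :
    ∃ C : ℝ, 0 < C ∧ ∀ (lam : ℂ), lam ∈ SSector ε →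
      ∀ ξ : Fin (N - 1) → ℂ, (∀ i, ξ i ∈ DSector η) →
      ∀ x : ℝ, 0 < x → ∀ k : Fin N, ∀ m l : Fin (N - 1), ∀ S : ℝ → ℂ,
        (S = fun y => ((BB lam ξ) ^ (2 : ℕ))⁻¹ * deriv (chiD N lam ξ k) y) ∨
        ((S = fun y => lam ^ ((1 : ℂ) / 2) * ((BB lam ξ) ^ (2 : ℕ))⁻¹ * chiD N lam ξ k y)
          ∧ (k : ℕ) < N - 1) ∨
        (S = fun y => Complex.I * ξ m * ((BB lam ξ) ^ (2 : ℕ))⁻¹ * chiD N lam ξ k y) →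
        ‖ξ l‖ * ‖S x‖ + ‖deriv S x‖ ≤ C * x⁻¹ := by
  have hπ := Real.pi_pos
  have hη4 : η < Real.pi / 4 := lt_of_lt_of_le hη' (min_le_left _ _)
  have hηε : η < ε / 2 := lt_of_lt_of_le hη' (min_le_right _ _)
  obtain ⟨c0, hc0def⟩ : ∃ c0 : ℝ, c0 = Real.cos (2 * η) := ⟨_, rfl⟩
  have hc0 : 0 < c0 := hc0def ▸ Real.cos_pos_of_mem_Ioo ⟨by linarith, by linarith⟩
  have hc01 : c0 ≤ 1 := hc0def ▸ Real.cos_le_one _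
  obtain ⟨δ, hδdef⟩ : ∃ δ : ℝ, δ = ε - 2 * η := ⟨_, rfl⟩
  have hδ0 : 0 < δ := by rw [hδdef]; linarith
  have hδπ : δ ≤ Real.pi := by rw [hδdef]; linarith
  obtain ⟨c1, hc1def⟩ : ∃ c1 : ℝ, c1 = (1 - Real.cos δ) / 2 := ⟨_, rfl⟩
  have hc1 : 0 < c1 := by
    have hlt : Real.cos δ < Real.cos 0 :=
      Real.strictAntiOn_cos ⟨le_refl 0, hπ.le⟩ ⟨hδ0.le, hδπ⟩ hδ0
    rw [Real.cos_zero] at hlt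
    rw [hc1def]; linarith
  obtain ⟨α, hαdef⟩ : ∃ α : ℝ, α = Real.sqrt (c0 / 2) := ⟨_, rfl⟩
  have hα : 0 < α := hαdef ▸ Real.sqrt_pos.2 (by positivity)
  obtain ⟨β, hβdef⟩ : ∃ β : ℝ, β = Real.sqrt c0⁻¹ := ⟨_, rfl⟩
  have hβ : 0 < β := hβdef ▸ Real.sqrt_pos.2 (by positivity)
  obtain ⟨γ, hγdef⟩ : ∃ γ : ℝ, γ = Real.sqrt (Real.sqrt c1⁻¹) := ⟨_, rfl⟩
  have hγ : 0 < γ := hγdef ▸ Real.sqrt_pos.2 (Real.sqrt_pos.2 (by positivity))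
  obtain ⟨K, hKdef⟩ : ∃ K : ℝ, K = (β + 1) ^ 2 * (γ + 1) ^ 2 := ⟨_, rfl⟩
  have hK : 0 < K := by rw [hKdef]; positivity
  have hβγK : β * γ * (γ + 1) ≤ K := by
    have e1 : β ≤ (β + 1) ^ 2 := by nlinarith
    have e2 : γ * (γ + 1) ≤ (γ + 1) ^ 2 := by nlinarith
    rw [hKdef, show β * γ * (γ + 1) = β * (γ * (γ + 1)) by ring]
    exact mul_le_mul e1 e2 (by positivity) (by positivity)
  have hγ1K : γ + 1 ≤ K := by
    have e1 : (1:ℝ) ≤ (β + 1) ^ 2 := by nlinarith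
    have e2 : γ + 1 ≤ (γ + 1) ^ 2 := by nlinarith
    rw [hKdef]
    nlinarith [mul_le_mul e1 e2 (by positivity : (0:ℝ) ≤ γ + 1)
      (by positivity : (0:ℝ) ≤ (β+1)^2)]
  have hβγ1K : β * (γ + 1) ≤ K := by
    have e1 : β ≤ (β + 1) ^ 2 := by nlinarith
    have e2 : γ + 1 ≤ (γ + 1) ^ 2 := by nlinarith
    rw [hKdef]
    exact mul_le_mul e1 e2 (by positivity) (by positivity)
  have hβ2γK : β * β * (γ + 1) * γ ≤ K := by
    have e1 : β * β ≤ (β + 1) ^ 2 := by nlinarith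
    have e2 : (γ + 1) * γ ≤ (γ + 1) ^ 2 := by nlinarith
    rw [hKdef, show β * β * (γ + 1) * γ = (β * β) * ((γ + 1) * γ) by ring]
    exact mul_le_mul e1 e2 (by positivity) (by positivity)
  refine ⟨(β + 1) * K / α, div_pos (mul_pos (by linarith) hK) hα, ?_⟩
  intro lam hlam ξ hξ x hx k m l S hScase
  obtain ⟨hlam0, hlamarg⟩ := hlam
  obtain ⟨w, hwdef⟩ : ∃ w : ℂ, w = ∑ j, ξ j ^ 2 := ⟨_, rfl⟩
  obtain ⟨A, hAdef⟩ : ∃ A : ℂ, A = AA ξ := ⟨_, rfl⟩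
  obtain ⟨B, hBdef⟩ : ∃ B : ℂ, B = BB lam ξ := ⟨_, rfl⟩
  rw [← hBdef] at hScase
  haveI hne : Nonempty (Fin (N - 1)) := ⟨⟨0, by omega⟩⟩
  have hsum : c0 * (∑ j, ‖ξ j‖ ^ 2) ≤ w.re := by
    rw [hwdef, Complex.re_sum, hc0def, Finset.mul_sum]
    apply Finset.sum_le_sum
    intro i _
    exact dsector_re_sq hη hη4 (hξ i).1 (hξ i).2
  have hwabs : ‖w‖ ≤ ∑ j, ‖ξ j‖ ^ 2 := by
    rw [hwdef]
    calc ‖∑ j, ξ j ^ 2‖ ≤ ∑ j, ‖ξ j ^ 2‖ :=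
          norm_sum_le _ _
      _ = ∑ j, ‖ξ j‖ ^ 2 := by simp [norm_pow]
  have hspos : 0 < ∑ j, ‖ξ j‖ ^ 2 := by
    apply Finset.sum_pos
    · intro i _
      exact pow_pos (norm_pos_iff.mpr (hξ i).1) 2
    · exact Finset.univ_nonempty
  have hwre : 0 < w.re := lt_of_lt_of_le (mul_pos hc0 hspos) hsum
  have hw0 : w ≠ 0 := fun h => by simp [h] at hwre
  have hcw : c0 * ‖w‖ ≤ w.re :=
    le_trans (mul_le_mul_of_nonneg_left hwabs hc0.le) hsum
  have hAw : A = w ^ ((1 : ℂ) / 2) := by rw [hAdef, hwdef]; rfl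
  have hA2 : A ^ (2 : ℕ) = w := by rw [hAw]; exact sqh_sq w
  have habsA2 : ‖A‖ ^ 2 = ‖w‖ := by rw [hAw]; exact sqh_abs_sq w
  have hApos : 0 < ‖A‖ := by
    have h0 : 0 < ‖w‖ := norm_pos_iff.mpr hw0
    nlinarith [norm_nonneg A]
  have hA0 : A ≠ 0 := fun h => by simp [h] at hApos
  have hreA : α * ‖A‖ ≤ A.re := by
    rw [hAw, hαdef]
    exact sqh_re_ge hc0 hw0 hcw
  have hξb : ∀ j : Fin (N - 1), ‖ξ j‖ ≤ β * ‖A‖ := by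
    intro j
    rw [hβdef]
    apply le_sqrt_mul (norm_nonneg _) (norm_nonneg _) (by positivity)
    rw [habsA2]
    have h1 : ‖ξ j‖ ^ 2 ≤ ∑ i, ‖ξ i‖ ^ 2 :=
      Finset.single_le_sum (f := fun i => ‖ξ i‖ ^ 2)
        (fun i _ => by positivity) (Finset.mem_univ j)
    have h2 : ∑ i, ‖ξ i‖ ^ 2 ≤ c0⁻¹ * ‖w‖ := by
      rw [← le_div_iff₀' hc0] at hsum
      calc ∑ i, ‖ξ i‖ ^ 2 ≤ w.re / c0 := hsum
        _ ≤ ‖w‖ / c0 :=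
            div_le_div_of_nonneg_right (Complex.re_le_norm w) hc0.le
        _ = c0⁻¹ * ‖w‖ := by ring
    linarith
  -- B facts
  obtain ⟨z, hzdef⟩ : ∃ z : ℂ, z = lam + w := ⟨_, rfl⟩
  have hargw : |w.arg| ≤ 2 * η := by
    rw [hc0def] at hcw
    exact arg_le_of_re_ge (by linarith) (by linarith) hw0 hcw
  have hang : |lam.arg - w.arg| ≤ Real.pi - δ := by
    have h1 : |lam.arg - w.arg| ≤ |lam.arg| + |w.arg| := by
      calc |lam.arg - w.arg| = |lam.arg + -w.arg| := by rw [sub_eq_add_neg]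
        _ ≤ |lam.arg| + |(-w.arg)| := abs_add_le _ _
        _ = |lam.arg| + |w.arg| := by rw [abs_neg]
    have h2 : |lam.arg| + |w.arg| ≤ Real.pi - δ := by
      rw [hδdef]; linarith
    linarith
  have hz2 : c1 * (‖lam‖ + ‖w‖) ^ 2 ≤ ‖z‖ ^ 2 := by
    rw [hc1def, hzdef]; exact abs_add_sq_ge hδ0 hδπ hang
  have hzpos : 0 < ‖z‖ := by
    have hl : 0 < ‖lam‖ := norm_pos_iff.mpr hlam0
    have hLW : 0 < ‖lam‖ + ‖w‖ := by
      linarith [norm_nonneg w]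
    have hzsq : 0 < ‖z‖ ^ 2 := lt_of_lt_of_le (mul_pos hc1 (pow_pos hLW 2)) hz2
    nlinarith [norm_nonneg z]
  have hz0 : z ≠ 0 := fun h => by simp [h] at hzpos
  have hBz : B = z ^ ((1 : ℂ) / 2) := by
    have hz' : z = lam + AA ξ ^ 2 := by rw [hzdef, ← hA2, hAdef]
    rw [hBdef, hz']; rfl
  have habsB2 : ‖B‖ ^ 2 = ‖z‖ := by rw [hBz]; exact sqh_abs_sq z
  have hBpos : 0 < ‖B‖ := by nlinarith [norm_nonneg B]
  have hB0 : B ≠ 0 := fun h => by simp [h] at hBpos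
  have hstep : ∀ s : ℝ, 0 ≤ s → s ^ 2 ≤ ‖lam‖ + ‖w‖ →
      s ≤ γ * ‖B‖ := by
    intro s hs hsle
    rw [hγdef]
    apply le_sqrt_mul hs (norm_nonneg B) (Real.sqrt_nonneg _)
    rw [habsB2]
    have h3 : ‖lam‖ + ‖w‖ ≤ Real.sqrt c1⁻¹ * ‖z‖ := by
      have h4 : (‖lam‖ + ‖w‖) ^ 2 ≤ c1⁻¹ * ‖z‖ ^ 2 := by
        rw [← le_div_iff₀' hc1] at hz2
        calc (‖lam‖ + ‖w‖) ^ 2 ≤ ‖z‖ ^ 2 / c1 := hz2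
          _ = c1⁻¹ * ‖z‖ ^ 2 := by ring
      exact le_sqrt_mul (by positivity) (norm_nonneg z) (by positivity) h4
    calc s ^ 2 ≤ ‖lam‖ + ‖w‖ := hsle
      _ ≤ Real.sqrt c1⁻¹ * ‖z‖ := h3
  have hAB : ‖A‖ ≤ γ * ‖B‖ := by
    apply hstep _ (norm_nonneg A)
    rw [habsA2]
    linarith [norm_nonneg lam]
  have hlamhalf : ‖lam ^ ((1 : ℂ) / 2)‖ ≤ γ * ‖B‖ := by
    apply hstep _ (norm_nonneg _)
    rw [sqh_abs_sq lam]
    linarith [norm_nonneg w]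
  have habsAB : ‖A + B‖ ≤ (γ + 1) * ‖B‖ := by
    calc ‖A + B‖ ≤ ‖A‖ + ‖B‖ := norm_add_le _ _
      _ ≤ γ * ‖B‖ + ‖B‖ := by linarith
      _ = (γ + 1) * ‖B‖ := by ring
  -- case analysis
  rcases hScase with hcase | ⟨hcase, hk⟩ | hcase
  · -- S = B⁻² ∂ χ
    by_cases hk : (k : ℕ) < N - 1
    · have hchifun : chiD N lam ξ k
          = fun y : ℝ => (-(Complex.I * ξ ⟨k, hk⟩ * (A + B) / A)) * Complex.exp (-A * y) := by
        funext y
        simp only [chiD, dif_pos hk, ← hAdef, ← hBdef]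
      have hSc : S = fun y : ℝ =>
          ((B ^ (2 : ℕ))⁻¹ * (-(Complex.I * ξ ⟨k, hk⟩ * (A + B) / A)) * (-A))
            * Complex.exp (-A * y) := by
        rw [hcase]; funext y
        have hdy : deriv (chiD N lam ξ k) y
            = (-(Complex.I * ξ ⟨k, hk⟩ * (A + B) / A)) * (-A * Complex.exp (-A * y)) := by
          rw [hchifun]
          exact ((hasDerivAt_expA A y).const_mul _).deriv
        rw [hdy]; ring
      have hc : ‖(B ^ (2 : ℕ))⁻¹ * (-(Complex.I * ξ ⟨k, hk⟩ * (A + B) / A)) * (-A)‖ ≤ K := by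
        have heq : (B ^ (2 : ℕ))⁻¹ * (-(Complex.I * ξ ⟨k, hk⟩ * (A + B) / A)) * (-A)
            = Complex.I * ξ ⟨k, hk⟩ * (A + B) / B ^ (2 : ℕ) := by
          field_simp
        rw [heq, norm_div, norm_mul, norm_mul, Complex.norm_I, one_mul, norm_pow]
        rw [div_le_iff₀ (pow_pos hBpos 2)]
        calc ‖ξ ⟨k, hk⟩‖ * ‖A + B‖
            ≤ (β * ‖A‖) * ((γ + 1) * ‖B‖) :=
              mul_le_mul (hξb _) habsAB (norm_nonneg _)
                (mul_nonneg hβ.le (norm_nonneg _))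
          _ ≤ (β * (γ * ‖B‖)) * ((γ + 1) * ‖B‖) := by
              have h5 := hAB
              gcongr
          _ = (β * γ * (γ + 1)) * ‖B‖ ^ 2 := by ring
          _ ≤ K * ‖B‖ ^ 2 :=
              mul_le_mul_of_nonneg_right hβγK (by positivity)
      exact master hα hreA hc (hξb l) hβ.le hSc hx
    · have hchifun : chiD N lam ξ k
          = fun y : ℝ => ((A + B) * B / A) * Complex.exp (-A * y) := by
        funext y
        simp only [chiD, dif_neg hk, ← hAdef, ← hBdef]
      have hSc : S = fun y : ℝ =>
          ((B ^ (2 : ℕ))⁻¹ * ((A + B) * B / A) * (-A)) * Complex.exp (-A * y) := by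
        rw [hcase]; funext y
        have hdy : deriv (chiD N lam ξ k) y
            = ((A + B) * B / A) * (-A * Complex.exp (-A * y)) := by
          rw [hchifun]
          exact ((hasDerivAt_expA A y).const_mul _).deriv
        rw [hdy]; ring
      have hc : ‖(B ^ (2 : ℕ))⁻¹ * ((A + B) * B / A) * (-A)‖ ≤ K := by
        have heq : (B ^ (2 : ℕ))⁻¹ * ((A + B) * B / A) * (-A) = -((A + B) / B) := by
          field_simp
        rw [heq, norm_neg, norm_div]
        rw [div_le_iff₀ hBpos]
        calc ‖A + B‖ ≤ (γ + 1) * ‖B‖ := habsAB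
          _ ≤ K * ‖B‖ := mul_le_mul_of_nonneg_right hγ1K hBpos.le
      exact master hα hreA hc (hξb l) hβ.le hSc hx
  · -- S = λ^{1/2} B⁻² χ, k < N-1
    have hchifun : chiD N lam ξ k
        = fun y : ℝ => (-(Complex.I * ξ ⟨k, hk⟩ * (A + B) / A)) * Complex.exp (-A * y) := by
      funext y
      simp only [chiD, dif_pos hk, ← hAdef, ← hBdef]
    have hSc : S = fun y : ℝ =>
        (lam ^ ((1 : ℂ) / 2) * (B ^ (2 : ℕ))⁻¹ * (-(Complex.I * ξ ⟨k, hk⟩ * (A + B) / A)))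
          * Complex.exp (-A * y) := by
      rw [hcase]; funext y
      simp only [hchifun]
      ring
    have hc : ‖lam ^ ((1 : ℂ) / 2) * (B ^ (2 : ℕ))⁻¹
          * (-(Complex.I * ξ ⟨k, hk⟩ * (A + B) / A))‖ ≤ K := by
      have heq : lam ^ ((1 : ℂ) / 2) * (B ^ (2 : ℕ))⁻¹
            * (-(Complex.I * ξ ⟨k, hk⟩ * (A + B) / A))
          = -(lam ^ ((1 : ℂ) / 2) * Complex.I * ξ ⟨k, hk⟩ * (A + B)) / (A * B ^ (2 : ℕ)) := by
        field_simp
      rw [heq, norm_div, norm_neg, norm_mul, norm_mul, norm_mul, Complex.norm_I,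
        norm_mul, norm_pow]
      rw [div_le_iff₀ (mul_pos hApos (pow_pos hBpos 2))]
      calc ‖lam ^ ((1 : ℂ) / 2)‖ * 1 * ‖ξ ⟨k, hk⟩‖
            * ‖A + B‖
          = ‖lam ^ ((1 : ℂ) / 2)‖ * ‖ξ ⟨k, hk⟩‖
            * ‖A + B‖ := by ring
        _ ≤ (γ * ‖B‖) * (β * ‖A‖) * ((γ + 1) * ‖B‖) := by
            gcongr <;> first
              | exact hlamhalf
              | exact hξb _
              | exact habsAB
              | exact norm_nonneg _
              | exact mul_nonneg hγ.le (norm_nonneg _)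
              | exact mul_nonneg hβ.le (norm_nonneg _)
        _ = (β * γ * (γ + 1)) * (‖A‖ * ‖B‖ ^ 2) := by ring
        _ ≤ K * (‖A‖ * ‖B‖ ^ 2) :=
            mul_le_mul_of_nonneg_right hβγK (by positivity)
    exact master hα hreA hc (hξb l) hβ.le hSc hx
  · -- S = i ξ_m B⁻² χ
    by_cases hk : (k : ℕ) < N - 1
    · have hchifun : chiD N lam ξ k
          = fun y : ℝ => (-(Complex.I * ξ ⟨k, hk⟩ * (A + B) / A)) * Complex.exp (-A * y) := by
        funext y
        simp only [chiD, dif_pos hk, ← hAdef, ← hBdef]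
      have hSc : S = fun y : ℝ =>
          (Complex.I * ξ m * (B ^ (2 : ℕ))⁻¹ * (-(Complex.I * ξ ⟨k, hk⟩ * (A + B) / A)))
            * Complex.exp (-A * y) := by
        rw [hcase]; funext y
        simp only [hchifun]
        ring
      have hc : ‖Complex.I * ξ m * (B ^ (2 : ℕ))⁻¹
            * (-(Complex.I * ξ ⟨k, hk⟩ * (A + B) / A))‖ ≤ K := by
        have heq : Complex.I * ξ m * (B ^ (2 : ℕ))⁻¹
              * (-(Complex.I * ξ ⟨k, hk⟩ * (A + B) / A))
            = ξ m * ξ ⟨k, hk⟩ * (A + B) / (A * B ^ (2 : ℕ)) := by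
          field_simp
          linear_combination (-(ξ m * ξ ⟨k, hk⟩ * (A + B))) * Complex.I_sq
        rw [heq, norm_div, norm_mul, norm_mul, norm_mul, norm_pow]
        rw [div_le_iff₀ (mul_pos hApos (pow_pos hBpos 2))]
        calc ‖ξ m‖ * ‖ξ ⟨k, hk⟩‖ * ‖A + B‖
            ≤ (β * ‖A‖) * (β * ‖A‖) * ((γ + 1) * ‖B‖) := by
              gcongr <;> first
                | exact hξb _
                | exact habsAB
                | exact norm_nonneg _
                | exact mul_nonneg hβ.le (norm_nonneg _)
          _ = (β * β * (γ + 1)) * (‖A‖ * (‖A‖ * ‖B‖)) := by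
              ring
          _ ≤ (β * β * (γ + 1)) * (‖A‖ * ((γ * ‖B‖) * ‖B‖)) := by
              have h5 := hAB
              gcongr
          _ = (β * β * (γ + 1) * γ) * (‖A‖ * ‖B‖ ^ 2) := by ring
          _ ≤ K * (‖A‖ * ‖B‖ ^ 2) :=
              mul_le_mul_of_nonneg_right hβ2γK (by positivity)
      exact master hα hreA hc (hξb l) hβ.le hSc hx
    · have hchifun : chiD N lam ξ k
          = fun y : ℝ => ((A + B) * B / A) * Complex.exp (-A * y) := by
        funext y
        simp only [chiD, dif_neg hk, ← hAdef, ← hBdef]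
      have hSc : S = fun y : ℝ =>
          (Complex.I * ξ m * (B ^ (2 : ℕ))⁻¹ * ((A + B) * B / A)) * Complex.exp (-A * y) := by
        rw [hcase]; funext y
        simp only [hchifun]
        ring
      have hc : ‖Complex.I * ξ m * (B ^ (2 : ℕ))⁻¹ * ((A + B) * B / A)‖ ≤ K := by
        have heq : Complex.I * ξ m * (B ^ (2 : ℕ))⁻¹ * ((A + B) * B / A)
            = Complex.I * ξ m * (A + B) / (A * B) := by
          field_simp
        rw [heq, norm_div, norm_mul, norm_mul, Complex.norm_I, one_mul, norm_mul]
        rw [div_le_iff₀ (mul_pos hApos hBpos)]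
        calc ‖ξ m‖ * ‖A + B‖
            ≤ (β * ‖A‖) * ((γ + 1) * ‖B‖) := by
              gcongr <;> first
                | exact hξb _
                | exact habsAB
                | exact norm_nonneg _
                | exact mul_nonneg hβ.le (norm_nonneg _)
          _ = (β * (γ + 1)) * (‖A‖ * ‖B‖) := by ring
          _ ≤ K * (‖A‖ * ‖B‖) :=
              mul_le_mul_of_nonneg_right hβγ1K
                (mul_nonneg (norm_nonneg _) (norm_nonneg _))
      exact master hα hreA hc (hξb l) hβ.le hSc hx

end
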